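/- Let n ≥ 2 and 1 ≤ k ≤ n−1 with k ≥ n−k, and let U ∈ U(n) be a unitary matrix written in block form U = [[X, Y], [Z, V]] with X ∈ ℂ^{(n−k)×k}, Y ∈ ℂ^{(n−k)×(n−k)}, Z ∈ ℂ^{k×k}, V ∈ ℂ^{k×(n−k)}. Then in ℂ[t] the characteristic polynomial of ZᴴZ factors as charpoly(ZᴴZ)(t) = (t − 1)^{2k−n} · charpoly(Y Yᴴ)(t). In particular 1 is a root of charpoly(ZᴴZ) of multiplicity at least 2k − n. -/
import Mathlib


open Matrix Polynomial

lemma eval_charpoly' {R : Type*} [CommRing R] {m : Type*} [DecidableEq m] [Fintype m]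
    (M : Matrix m m R) (t : R) :
    (M.charpoly).eval t = (t • (1 : Matrix m m R) - M).det := by
  rw [Matrix.charpoly, ← Polynomial.coe_evalRingHom, RingHom.map_det]
  congr 1
  ext i j
  by_cases h : i = j <;>
    simp [charmatrix_apply, h, Matrix.one_apply, Matrix.diagonal_apply]

lemma det_smul_one_add_mul {K : Type*} [Field K] {a b : ℕ} (hab : a ≤ b)
    (A : Matrix (Fin a) (Fin b) K) (B : Matrix (Fin b) (Fin a) K) {s : K} (hs : s ≠ 0) :
    (s • (1 : Matrix (Fin b) (Fin b) K) + B * A).det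
      = s ^ (b - a) * (s • (1 : Matrix (Fin a) (Fin a) K) + A * B).det := by
  have h1 : s • (1 : Matrix (Fin b) (Fin b) K) + B * A
      = s • ((1 : Matrix (Fin b) (Fin b) K) + (s⁻¹ • B) * A) := by
    rw [smul_add, Matrix.smul_mul, smul_smul, mul_inv_cancel₀ hs, one_smul]
  have h2 : s • (1 : Matrix (Fin a) (Fin a) K) + A * B
      = s • ((1 : Matrix (Fin a) (Fin a) K) + A * (s⁻¹ • B)) := by
    rw [smul_add, Matrix.mul_smul, smul_comm, smul_smul, inv_mul_cancel₀ hs, one_smul]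
  rw [h1, h2, Matrix.det_smul, Matrix.det_smul, Matrix.det_one_add_mul_comm,
    Fintype.card_fin, Fintype.card_fin, ← mul_assoc, ← pow_add,
    Nat.sub_add_cancel hab]

/-- For a block-decomposed unitary matrix `U = [[X, Y], [Z, V]]` with `k ≥ n - k`, the
characteristic polynomial of `ZᴴZ` factors as `(t - 1)^(2k - n) · charpoly(Y Yᴴ)`;
in particular `1` is a root of `charpoly(ZᴴZ)` of multiplicity at least `2k - n`. -/
theorem charpoly_conjTranspose_mul_self_factorization_of_unitary_blocks
    (n k : ℕ) (hn : 2 ≤ n) (hk1 : 1 ≤ k) (hk2 : k ≤ n - 1) (hkge : n - k ≤ k)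
    (X : Matrix (Fin (n - k)) (Fin k) ℂ) (Y : Matrix (Fin (n - k)) (Fin (n - k)) ℂ)
    (Z : Matrix (Fin k) (Fin k) ℂ) (V : Matrix (Fin k) (Fin (n - k)) ℂ)
    (hU₁ : (Matrix.fromBlocks X Y Z V)ᴴ * Matrix.fromBlocks X Y Z V = 1)
    (hU₂ : Matrix.fromBlocks X Y Z V * (Matrix.fromBlocks X Y Z V)ᴴ = 1) :
    (Zᴴ * Z).charpoly = (Polynomial.X - 1) ^ (2 * k - n) * (Y * Yᴴ).charpoly ∧
      2 * k - n ≤ (Zᴴ * Z).charpoly.rootMultiplicity 1 := by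
  rw [fromBlocks_conjTranspose, fromBlocks_multiply, ← fromBlocks_one, fromBlocks_inj]
    at hU₁ hU₂
  have h1 : Zᴴ * Z = 1 - Xᴴ * X := by linear_combination (norm := abel) hU₁.1
  have h2 : Y * Yᴴ = 1 - X * Xᴴ := by linear_combination (norm := abel) hU₂.1
  have hkn : k - (n - k) = 2 * k - n := by omega
  have key : (Zᴴ * Z).charpoly = (Polynomial.X - 1) ^ (2 * k - n) * (Y * Yᴴ).charpoly := by
    rw [h1, h2]
    apply Polynomial.eq_of_infinite_eval_eq
    refine ((Set.finite_singleton (1 : ℂ)).infinite_compl).mono ?_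
    intro t ht
    have hs : t - 1 ≠ 0 := sub_ne_zero.mpr ht
    have e1 : t • (1 : Matrix (Fin k) (Fin k) ℂ) - (1 - Xᴴ * X)
        = (t - 1) • 1 + Xᴴ * X := by rw [sub_smul, one_smul]; abel
    have e2 : t • (1 : Matrix (Fin (n - k)) (Fin (n - k)) ℂ) - (1 - X * Xᴴ)
        = (t - 1) • 1 + X * Xᴴ := by rw [sub_smul, one_smul]; abel
    simp only [Set.mem_setOf_eq, eval_mul, eval_pow, eval_sub, eval_X, eval_one,
      eval_charpoly', e1, e2]
    rw [det_smul_one_add_mul hkge X Xᴴ hs, hkn]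
  refine ⟨key, ?_⟩
  rw [Polynomial.le_rootMultiplicity_iff (Matrix.charpoly_monic _).ne_zero, key, Polynomial.C_1]
  exact Dvd.intro _ rfl
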